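/- arXiv:1801.04739 — 2 statements merged into one kernel-verified Lean document; each statement's English description precedes it below -/
import Mathlib

section
/- (Path coupling, contraction case) Let φ : Ω × Ω → {0,…,D} be an integer-valued metric on a finite set Ω and U ⊆ Ω × Ω a set of pairs such that any pair (x,y) is joined by a path x = z_0, z_1, …, z_r = y with (z_i, z_{i+1}) ∈ U and ∑ φ(z_i, z_{i+1}) = φ(x,y). Suppose a Markovian coupling (X_t, Y_t) → (X_{t+1}, Y_{t+1}) satisfies E[φ(X_{t+1}, Y_{t+1})] ≤ β φ(X_t, Y_t) for all pairs in U, with β < 1. Then E[φ(X_{t+1}, Y_{t+1})] ≤ β φ(X_t, Y_t) for ALL pairs (X_t, Y_t) ∈ Ω × Ω. -/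
/-- **Path coupling (contraction case).** If `φ` is an integer-valued metric bounded by
`D` on a finite set `Ω`, every pair is joined by a `U`-path along which `φ` is additive,
and a Markovian coupling (given by a random update function `f` applied to both
coordinates) contracts `φ` in expectation by a factor `β < 1` on all pairs in `U`, then
it contracts `φ` by the factor `β` on ALL pairs. -/
theorem path_coupling_contraction
    {Ω α : Type*} [Fintype Ω] [DecidableEq Ω] [Fintype α]
    (D : ℕ) (φ : Ω → Ω → ℕ)
    (hφ0 : ∀ x y, φ x y = 0 ↔ x = y)
    (hφsymm : ∀ x y, φ x y = φ y x)
    (hφtri : ∀ x y z, φ x z ≤ φ x y + φ y z)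
    (hφD : ∀ x y, φ x y ≤ D)
    (U : Set (Ω × Ω))
    (hpath : ∀ x y : Ω, ∃ (r : ℕ) (z : ℕ → Ω), z 0 = x ∧ z r = y ∧
      (∀ i < r, (z i, z (i + 1)) ∈ U) ∧
      ∑ i ∈ Finset.range r, φ (z i) (z (i + 1)) = φ x y)
    (p : α → ℝ) (hp0 : ∀ a, 0 ≤ p a) (hp1 : ∑ a, p a = 1)
    (f : α → Ω → Ω)
    (β : ℝ) (hβ0 : 0 ≤ β) (hβ1 : β < 1)
    (hU : ∀ x y : Ω, (x, y) ∈ U →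
      ∑ a, p a * (φ (f a x) (f a y) : ℝ) ≤ β * (φ x y : ℝ)) :
    ∀ x y : Ω, ∑ a, p a * (φ (f a x) (f a y) : ℝ) ≤ β * (φ x y : ℝ) := by
  intro x y
  obtain ⟨r, z, hz0, hzr, hzU, hzsum⟩ := hpath x y
  -- pointwise triangle inequality along the path
  have key : ∀ a, (φ (f a (z 0)) (f a (z r)) : ℝ) ≤
      ∑ i ∈ Finset.range r, (φ (f a (z i)) (f a (z (i + 1))) : ℝ) := by
    intro a
    clear hz0 hzr hzU hzsum
    induction r with
    | zero => simp [(hφ0 _ _).mpr rfl]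
    | succ n ih =>
      rw [Finset.sum_range_succ]
      calc (φ (f a (z 0)) (f a (z (n+1))) : ℝ)
          ≤ (φ (f a (z 0)) (f a (z n)) : ℝ) + (φ (f a (z n)) (f a (z (n+1))) : ℝ) := by
            exact_mod_cast hφtri _ _ _
        _ ≤ _ := by linarith [ih]
  calc ∑ a, p a * (φ (f a x) (f a y) : ℝ)
      ≤ ∑ a, p a * ∑ i ∈ Finset.range r, (φ (f a (z i)) (f a (z (i + 1))) : ℝ) := by
        apply Finset.sum_le_sum
        intro a _
        have := key a
        rw [hz0, hzr] at this
        exact mul_le_mul_of_nonneg_left this (hp0 a)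
    _ = ∑ i ∈ Finset.range r, ∑ a, p a * (φ (f a (z i)) (f a (z (i + 1))) : ℝ) := by
        rw [Finset.sum_comm]
        simp [Finset.mul_sum]
    _ ≤ ∑ i ∈ Finset.range r, β * (φ (z i) (z (i + 1)) : ℝ) := by
        apply Finset.sum_le_sum
        intro i hi
        exact hU _ _ (hzU i (Finset.mem_range.mp hi))
    _ = β * (φ x y : ℝ) := by
        rw [← Finset.mul_sum, ← hzsum]
        push_cast
        ring
end

section
/- If a nonnegative integer-valued stochastic process (D_t) bounded by D satisfies E[D_{t+1} | D_t] ≤ D_t (supermartingale) and P(D_{t+1} ≠ D_t | D_t = d) ≥ α for all d ≥ 1, then the expected hitting time of 0 from any starting value is at most D²/α. -/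
/-- **Hitting time of a bounded non-expansive integer process.** Consider a Markov
chain on `{0, …, D}` with transition kernel `q`, with `0` absorbing, which is a
supermartingale (`E[D_{t+1} | D_t = d] ≤ d`) and moves with probability at least `α`
from every state `d ≥ 1`. Then the expected hitting time of `0` (the solution `h` of the
standard hitting-time recurrence) from any starting value is at most `D²/α`. -/
theorem hitting_time_bound_supermartingale
    (D : ℕ) (hD : 1 ≤ D) (α : ℝ) (hα : 0 < α)
    (q : Fin (D + 1) → Fin (D + 1) → ℝ)
    (hq0 : ∀ d e, 0 ≤ q d e) (hq1 : ∀ d, ∑ e, q d e = 1)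
    (habs : q 0 0 = 1)
    (hsuper : ∀ d : Fin (D + 1), ∑ e, q d e * (e : ℝ) ≤ (d : ℝ))
    (hmove : ∀ d : Fin (D + 1), d ≠ 0 →
      α ≤ ∑ e ∈ Finset.univ.filter (fun e => e ≠ d), q d e)
    (h : Fin (D + 1) → ℝ)
    (hh0 : h 0 = 0) (hhnonneg : ∀ d, 0 ≤ h d)
    (hrec : ∀ d : Fin (D + 1), d ≠ 0 → h d = 1 + ∑ e, q d e * h e) :
    ∀ d, h d ≤ (D : ℝ) ^ 2 / α := by
  intro d
  have hDpos : (0:ℝ) < (D:ℝ)^2 := by positivity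
  refine le_of_forall_pos_le_add ?_
  intro ε hε
  set c : ℝ := 1 + ε * α / (D:ℝ)^2 with hcdef
  clear_value c
  have hc1 : 1 < c := by
    have h0 : 0 < ε * α / (D:ℝ)^2 := by positivity
    rw [hcdef]; linarith
  have hcα : 0 < c / α := by positivity
  set φ : Fin (D+1) → ℝ := fun e => c * (2*(D:ℝ)*(e:ℝ) - (e:ℝ)^2) / α with hφdef
  clear_value φ
  -- key inequality: one-step decrease of φ by at least c
  have key : ∀ d : Fin (D+1), d ≠ 0 → 1 + (∑ e, q d e * φ e) + (c - 1) ≤ φ d := by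
    intro d hd
    set S1 : ℝ := ∑ e, q d e * (e:ℝ) with hS1
    set S2 : ℝ := ∑ e, q d e * (e:ℝ)^2 with hS2
    have hQ : (∑ e, q d e * ((e:ℝ) - (d:ℝ))^2) = S2 - 2*(d:ℝ)*S1 + (d:ℝ)^2 := by
      have heq : (∑ e, q d e * ((e:ℝ) - (d:ℝ))^2)
          = ∑ e, (q d e * (e:ℝ)^2 - 2*(d:ℝ)*(q d e * (e:ℝ)) + (d:ℝ)^2 * q d e) := by
        refine Finset.sum_congr rfl fun e _ => by ring
      rw [heq, Finset.sum_add_distrib, Finset.sum_sub_distrib, ← Finset.mul_sum,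
        ← Finset.mul_sum, hq1 d]
      ring
    have hQge : α ≤ ∑ e, q d e * ((e:ℝ) - (d:ℝ))^2 := by
      calc α ≤ ∑ e ∈ Finset.univ.filter (fun e => e ≠ d), q d e := hmove d hd
        _ ≤ ∑ e ∈ Finset.univ.filter (fun e => e ≠ d), q d e * ((e:ℝ) - (d:ℝ))^2 := by
          refine Finset.sum_le_sum fun e he => ?_
          have hed : e ≠ d := (Finset.mem_filter.mp he).2
          have hne : (e:ℕ) ≠ (d:ℕ) := fun hh => hed (Fin.ext hh)
          have h1 : (1:ℝ) ≤ ((e:ℝ) - (d:ℝ))^2 := by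
            rcases Nat.lt_or_ge (e:ℕ) (d:ℕ) with hlt | hge
            · have hlt' : ((e:ℕ):ℝ) + 1 ≤ ((d:ℕ):ℝ) := by exact_mod_cast hlt
              nlinarith
            · have hlt : (d:ℕ) < (e:ℕ) := lt_of_le_of_ne hge (Ne.symm hne)
              have hlt' : ((d:ℕ):ℝ) + 1 ≤ ((e:ℕ):ℝ) := by exact_mod_cast hlt
              nlinarith
          nlinarith [hq0 d e]
        _ ≤ ∑ e, q d e * ((e:ℝ) - (d:ℝ))^2 := by
          refine Finset.sum_le_sum_of_subset_of_nonneg (Finset.filter_subset _ _)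
            fun e _ _ => mul_nonneg (hq0 d e) (sq_nonneg _)
    have hdD : (d:ℝ) ≤ (D:ℝ) := by exact_mod_cast Nat.lt_succ_iff.mp d.isLt
    have hS1d : S1 ≤ (d:ℝ) := hsuper d
    have hsumφ : (∑ e, q d e * φ e) = (c/α) * (2*(D:ℝ)*S1 - S2) := by
      have heq : (∑ e, q d e * φ e)
          = ∑ e, (c/α) * (2*(D:ℝ)*(q d e * (e:ℝ)) - q d e * (e:ℝ)^2) := by
        refine Finset.sum_congr rfl fun e _ => ?_
        rw [hφdef]
        field_simp
      rw [heq, ← Finset.mul_sum, Finset.sum_sub_distrib, ← Finset.mul_sum]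
    have hmain : α ≤ 2*(D:ℝ)*((d:ℝ) - S1) + S2 - (d:ℝ)^2 := by
      have hQ' : α ≤ S2 - 2*(d:ℝ)*S1 + (d:ℝ)^2 := hQ ▸ hQge
      nlinarith
    have hφd : φ d = (c/α) * (2*(D:ℝ)*(d:ℝ) - (d:ℝ)^2) := by
      rw [hφdef]; field_simp
    rw [hsumφ, hφd]
    have hmul : (c/α) * α ≤ (c/α) * (2*(D:ℝ)*((d:ℝ) - S1) + S2 - (d:ℝ)^2) :=
      mul_le_mul_of_nonneg_left hmain (le_of_lt hcα)
    have hcα' : (c/α) * α = c := by field_simp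
    nlinarith [hmul]
  -- maximum argument
  obtain ⟨m, -, hm⟩ := Finset.exists_max_image Finset.univ (fun e => h e - φ e)
    ⟨0, Finset.mem_univ 0⟩
  have hφ0 : φ 0 = 0 := by rw [hφdef]; norm_num
  have hle : ∀ e, h e ≤ φ e := by
    rcases eq_or_ne m 0 with hm0 | hm0
    · intro e
      have hme := hm e (Finset.mem_univ e)
      simp only [hm0, hh0, hφ0] at hme
      linarith
    · exfalso
      have hM : h m = 1 + ∑ e, q m e * h e := hrec m hm0
      have hbound : (∑ e, q m e * h e) ≤ (∑ e, q m e * φ e) + (h m - φ m) := by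
        calc (∑ e, q m e * h e) ≤ ∑ e, q m e * (φ e + (h m - φ m)) := by
              refine Finset.sum_le_sum fun e _ => ?_
              have hme := hm e (Finset.mem_univ e)
              exact mul_le_mul_of_nonneg_left (by linarith) (hq0 m e)
          _ = (∑ e, q m e * φ e) + (h m - φ m) := by
              rw [Finset.sum_congr rfl (fun e _ => by ring : ∀ e ∈ Finset.univ,
                q m e * (φ e + (h m - φ m)) = q m e * φ e + (h m - φ m) * q m e)]
              rw [Finset.sum_add_distrib, ← Finset.mul_sum, hq1 m]
              ring
      have hk := key m hm0
      linarith
  have hφle : φ d ≤ (D:ℝ)^2 / α + ε := by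
    have h1 : 2*(D:ℝ)*(d:ℝ) - (d:ℝ)^2 ≤ (D:ℝ)^2 := by
      nlinarith [sq_nonneg ((D:ℝ) - (d:ℝ))]
    have hc0 : 0 < c := by linarith
    have h2 : φ d ≤ c * (D:ℝ)^2 / α := by
      simp only [hφdef]
      gcongr
      
    have h3 : c * (D:ℝ)^2 / α = (D:ℝ)^2 / α + ε := by
      rw [hcdef]
      field_simp
    linarith
  exact le_trans (hle d) hφle
end
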